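/- Let q ∈ {2, ∞}. Consider the splitting of the ℓ_q-row-norm regularized MSVM: minimize F₂(W,b,A,U,V) = (1/n)Σ_{i,j} c_{ij}[a_{ij}]₊ + λ₁‖U‖₁ + λ₂ Σ_{j=1}^p ‖v^j‖_q + (λ₃/2)‖b‖₂² subject to A = XᵀW + e bᵀ + E, U = W, V = W, We = 0, eᵀ b = 0, with λ₁, λ₂ ≥ 0, λ₃ > 0, c_{ij} = I(y_i ≠ j), and assume this problem has an optimal solution with optimal value F₂* together with corresponding optimal Lagrange multipliers (a saddle point of the Lagrangian). Let α, μ, ν > 0 and define the augmented Lagrangian L₂(W,b,A,U,V,Π,Λ,Γ) = (1/n)Σ_{i,j} c_{ij}[a_{ij}]₊ + λ₁‖U‖₁ + λ₂ Σ_j ‖v^j‖_q + (λ₃/2)‖b‖₂² + ⟨Π, XᵀW + e bᵀ − A + E⟩ + (α/2)‖XᵀW + e bᵀ − A + E‖_F² + ⟨Λ, W − U⟩ + (μ/2)‖W − U‖_F² + ⟨Γ, W − V⟩ + (ν/2)‖W − V‖_F². Suppose the sequence (W^k, b^k, A^k, U^k, V^k, Π^k, Λ^k, Γ^k) satisfies,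 for every k: (W^{k+1}, b^{k+1}) minimizes L₂(·,·,A^k,U^k,V^k,Π^k,Λ^k,Γ^k) over {(W,b) : We = 0, eᵀb = 0}; (A^{k+1}, U^{k+1}, V^{k+1}) minimizes L₂(W^{k+1},b^{k+1},·,·,·,Π^k,Λ^k,Γ^k); Π^{k+1} = Π^k + α(XᵀW^{k+1} + e(b^{k+1})ᵀ − A^{k+1} + E); Λ^{k+1} = Λ^k + μ(W^{k+1} − U^{k+1}); and Γ^{k+1} = Γ^k + ν(W^{k+1} − V^{k+1}). Then F₂(W^k,b^k,A^k,U^k,V^k) → F₂*, and ‖XᵀW^k + e(b^k)ᵀ + E − A^k‖_F → 0, ‖W^k − U^k‖_F → 0, and ‖W^k − V^k‖_F → 0 as k → ∞. -/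

import Mathlib

open Matrix Filter

open RealInnerProductSpace

set_option maxHeartbeats 1000000


private lemma quad_nonneg {L Q : ℝ} (h : ∀ t : ℝ, 0 < t → t ≤ 1 → 0 ≤ t * L + t ^ 2 * Q) :
    0 ≤ L := by
  by_contra hL
  push_neg at hL
  have hQ : 0 < |Q| + 1 := by positivity
  set t : ℝ := min 1 (-L / (2 * (|Q| + 1))) with ht
  have h1 : 0 < t := lt_min one_pos (div_pos (by linarith) (by positivity))
  have h2 : t ≤ 1 := min_le_left _ _
  have h3 : t * (2 * (|Q| + 1)) ≤ -L := by
    have := min_le_right 1 (-L / (2 * (|Q| + 1)))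
    calc t * (2 * (|Q| + 1)) ≤ (-L / (2 * (|Q| + 1))) * (2 * (|Q| + 1)) := by
          apply mul_le_mul_of_nonneg_right this (by positivity)
      _ = -L := by field_simp
  have h4 := h t h1 h2
  have h5 : t ^ 2 * Q ≤ t * (t * (|Q| + 1)) := by
    have : Q ≤ |Q| + 1 := (le_abs_self Q).trans (by linarith)
    nlinarith
  nlinarith

private lemma inner_tendsto_zero {H : Type*} [NormedAddCommGroup H] [InnerProductSpace ℝ H]
    {u v : ℕ → H} {C : ℝ} (hu : ∀ᶠ k in atTop, ‖u k‖ ≤ C)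
    (hv : Tendsto (fun k => ‖v k‖) atTop (nhds 0)) :
    Tendsto (fun k => ⟪u k, v k⟫) atTop (nhds 0) := by
  have : Tendsto (fun k => C * ‖v k‖) atTop (nhds 0) := by simpa using hv.const_mul C
  apply squeeze_zero_norm' _ this
  filter_upwards [hu] with k hk
  calc ‖⟪u k, v k⟫‖ = |⟪u k, v k⟫| := Real.norm_eq_abs _
    _ ≤ ‖u k‖ * ‖v k‖ := abs_real_inner_le_norm _ _
    _ ≤ C * ‖v k‖ := mul_le_mul_of_nonneg_right hk (norm_nonneg _)

private def toE {ι κ : Type*} [Fintype ι] [Fintype κ] (M : ι → κ → ℝ) :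
    EuclideanSpace ℝ (ι × κ) := WithLp.toLp 2 (fun x : ι × κ => M x.1 x.2)

private lemma inner_toE {ι κ : Type*} [Fintype ι] [Fintype κ] (M N : ι → κ → ℝ) :
    ⟪toE M, toE N⟫ = ∑ i, ∑ j, M i j * N i j := by
  simp [toE, PiLp.inner_apply, RCLike.inner_apply, conj_trivial]
  rw [Fintype.sum_prod_type]
  exact Finset.sum_congr rfl fun i _ => Finset.sum_congr rfl fun j _ => mul_comm _ _

private lemma normsq_toE {ι κ : Type*} [Fintype ι] [Fintype κ] (M : ι → κ → ℝ) :
    ‖toE M‖^2 = ∑ i, ∑ j, (M i j)^2 := by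
  rw [← real_inner_self_eq_norm_sq, inner_toE]
  simp_rw [pow_two]

private lemma smul_toE_sub {ι κ : Type*} [Fintype ι] [Fintype κ] (s : ℝ) (M N : ι → κ → ℝ) :
    s • toE M - s • toE N = s • toE (fun i j => M i j - N i j) := by
  ext x
  simp [toE, PiLp.smul_apply, PiLp.sub_apply, smul_eq_mul]
  ring

private lemma inner_sE' {ι κ : Type*} [Fintype ι] [Fintype κ] {s : ℝ} (hs : s ≠ 0)
    (P M : ι → κ → ℝ) :
    ⟪s⁻¹ • toE P, s • toE M⟫ = ∑ i, ∑ j, P i j * M i j := by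
  rw [real_inner_smul_left, real_inner_smul_right, inner_toE, ← mul_assoc,
    inv_mul_cancel₀ hs, one_mul]

private lemma normsq_sE' {ι κ : Type*} [Fintype ι] [Fintype κ] (s : ℝ)
    (M : ι → κ → ℝ) :
    ‖s • toE M‖^2 = (s * s) * ∑ i, ∑ j, (M i j)^2 := by
  rw [norm_smul, Real.norm_eq_abs, mul_pow, sq_abs, normsq_toE]
  ring

private lemma normsq_prod {E F : Type*} [NormedAddCommGroup E] [InnerProductSpace ℝ E]
    [NormedAddCommGroup F] [InnerProductSpace ℝ F] (x : WithLp 2 (E × F)) :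
    ‖x‖^2 = ‖x.fst‖^2 + ‖x.snd‖^2 := by
  exact WithLp.prod_norm_sq_eq_of_L2 x

private lemma sum_convex_bound {ι : Type*} (s : Finset ι) (F Fa Fb : ι → ℝ) (t : ℝ)
    (h : ∀ i ∈ s, F i ≤ (1-t) * Fa i + t * Fb i) :
    ∑ i ∈ s, F i ≤ (1-t) * ∑ i ∈ s, Fa i + t * ∑ i ∈ s, Fb i := by
  calc ∑ i ∈ s, F i ≤ ∑ i ∈ s, ((1-t) * Fa i + t * Fb i) := Finset.sum_le_sum h
    _ = (1-t) * ∑ i ∈ s, Fa i + t * ∑ i ∈ s, Fb i := by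
        rw [Finset.sum_add_distrib, ← Finset.mul_sum, ← Finset.mul_sum]

private lemma max_conv {x y t : ℝ} (ht0 : 0 ≤ t) (ht1 : t ≤ 1) :
    max (x + t * (y - x)) 0 ≤ (1-t) * max x 0 + t * max y 0 := by
  have h1 : x ≤ max x 0 := le_max_left _ _
  have h2 : y ≤ max y 0 := le_max_left _ _
  have h3 : (0:ℝ) ≤ max x 0 := le_max_right _ _
  have h4 : (0:ℝ) ≤ max y 0 := le_max_right _ _
  apply max_le
  · nlinarith
  · nlinarith

private lemma abs_conv {x y t : ℝ} (ht0 : 0 ≤ t) (ht1 : t ≤ 1) :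
    |x + t * (y - x)| ≤ (1-t) * |x| + t * |y| := by
  have h : x + t * (y - x) = (1-t) * x + t * y := by ring
  rw [h]
  calc |(1-t) * x + t * y| ≤ |(1-t) * x| + |t * y| := abs_add_le _ _
    _ = (1-t) * |x| + t * |y| := by
        rw [abs_mul, abs_mul, abs_of_nonneg (by linarith : (0:ℝ) ≤ 1 - t), abs_of_nonneg ht0]

private lemma sq_conv {x y t : ℝ} (ht0 : 0 ≤ t) (ht1 : t ≤ 1) :
    (x + t * (y - x))^2 ≤ (1-t) * x^2 + t * y^2 := by
  nlinarith [mul_nonneg (mul_nonneg ht0 (sub_nonneg.mpr ht1)) (sq_nonneg (y - x))]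
private theorem admm_abstract
    {Hx : Type*} [AddCommGroup Hx] [Module ℝ Hx]
    {H : Type*} [NormedAddCommGroup H] [InnerProductSpace ℝ H]
    (C : Hx → Prop) (f : Hx → ℝ) (g : H → ℝ) (G : Hx → H)
    (hC : ∀ x y, C x → C y → ∀ t : ℝ, 0 ≤ t → t ≤ 1 → C (x + t • (y - x)))
    (hf : ∀ x y, ∀ t : ℝ, 0 ≤ t → t ≤ 1 → f (x + t • (y - x)) ≤ f x + t * (f y - f x))
    (hg : ∀ x y, ∀ t : ℝ, 0 ≤ t → t ≤ 1 → g (x + t • (y - x)) ≤ g x + t * (g y - g x))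
    (hG : ∀ x y (t : ℝ), G (x + t • (y - x)) = G x + t • (G y - G x))
    (xs : Hx) (zs Ys : H) (hxs : C xs) (hzs : G xs = zs)
    (hsad : ∀ x z, C x → f xs + g zs ≤ f x + g z + ⟪Ys, G x - z⟫)
    (x : ℕ → Hx) (z Y : ℕ → H)
    (hx : ∀ k, C (x (k+1)) ∧ ∀ x', C x' →
      f (x (k+1)) + g (z k) + ⟪Y k, G (x (k+1)) - z k⟫ + 1/2 * ‖G (x (k+1)) - z k‖^2
        ≤ f x' + g (z k) + ⟪Y k, G x' - z k⟫ + 1/2 * ‖G x' - z k‖^2)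
    (hz : ∀ k z',
      f (x (k+1)) + g (z (k+1)) + ⟪Y k, G (x (k+1)) - z (k+1)⟫
          + 1/2 * ‖G (x (k+1)) - z (k+1)‖^2
        ≤ f (x (k+1)) + g z' + ⟪Y k, G (x (k+1)) - z'⟫ + 1/2 * ‖G (x (k+1)) - z'‖^2)
    (hY : ∀ k, Y (k+1) = Y k + (G (x (k+1)) - z (k+1))) :
    Tendsto (fun k => f (x k) + g (z k)) atTop (nhds (f xs + g zs)) ∧
    Tendsto (fun k => ‖G (x k) - z k‖) atTop (nhds 0) := by
  -- x-step linearized optimality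
  have hxopt : ∀ k x', C x' →
      0 ≤ f x' - f (x (k+1)) + ⟪Y k, G x' - G (x (k+1))⟫
          + ⟪G (x (k+1)) - z k, G x' - G (x (k+1))⟫ := by
    intro k x' hx'
    apply quad_nonneg (Q := 1/2 * ‖G x' - G (x (k+1))‖^2)
    intro t ht0 ht1
    have hfeas_t := hC _ _ (hx k).1 hx' t ht0.le ht1
    have h := (hx k).2 _ hfeas_t
    rw [hG] at h
    have e1 : G (x (k+1)) + t • (G x' - G (x (k+1))) - z k
        = (G (x (k+1)) - z k) + t • (G x' - G (x (k+1))) := by abel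
    rw [e1, inner_add_right, real_inner_smul_right, norm_add_sq_real,
      real_inner_smul_right, norm_smul, Real.norm_eq_abs, mul_pow, sq_abs] at h
    have hfb := hf (x (k+1)) x' t ht0.le ht1
    ring_nf at h hfb ⊢
    linarith
  -- z-step linearized optimality
  have hzopt : ∀ k z', g (z (k+1)) ≤ g z' + ⟪Y (k+1), z (k+1) - z'⟫ := by
    intro k z'
    have key : 0 ≤ g z' - g (z (k+1)) - ⟪Y k, z' - z (k+1)⟫
        - ⟪G (x (k+1)) - z (k+1), z' - z (k+1)⟫ := by
      apply quad_nonneg (Q := 1/2 * ‖z' - z (k+1)‖^2)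
      intro t ht0 ht1
      have h := hz k (z (k+1) + t • (z' - z (k+1)))
      have e1 : G (x (k+1)) - (z (k+1) + t • (z' - z (k+1)))
          = (G (x (k+1)) - z (k+1)) - t • (z' - z (k+1)) := sub_add_eq_sub_sub _ _ _
      have n1 : ‖(G (x (k+1)) - z (k+1)) - t • (z' - z (k+1))‖^2
          = ‖G (x (k+1)) - z (k+1)‖^2
            - 2 * (t * ⟪G (x (k+1)) - z (k+1), z' - z (k+1)⟫)
            + t^2 * ‖z' - z (k+1)‖^2 := by
        rw [norm_sub_sq_real (G (x (k+1)) - z (k+1)) (t • (z' - z (k+1))),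
          real_inner_smul_right, norm_smul, Real.norm_eq_abs, mul_pow, sq_abs]
      have n2 : ⟪Y k, (G (x (k+1)) - z (k+1)) - t • (z' - z (k+1))⟫
          = ⟪Y k, G (x (k+1)) - z (k+1)⟫ - t * ⟪Y k, z' - z (k+1)⟫ := by
        rw [inner_sub_right (𝕜 := ℝ) (Y k) (G (x (k+1)) - z (k+1)) (t • (z' - z (k+1))),
          real_inner_smul_right]
      rw [e1, n2, n1] at h
      have hgb := hg (z (k+1)) z' t ht0.le ht1
      ring_nf at h hgb ⊢
      linarith
    have e2 : z (k+1) - z' = -(z' - z (k+1)) := (neg_sub _ _).symm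
    rw [hY k, e2, inner_neg_right, inner_add_left]
    linarith
  -- lower bound from the saddle point
  have hlow : ∀ k, f xs + g zs
      ≤ f (x (k+1)) + g (z (k+1)) + ⟪Ys, G (x (k+1)) - z (k+1)⟫ :=
    fun k => hsad _ _ (hx k).1
  -- upper bound
  have hup : ∀ k, f (x (k+1)) + g (z (k+1)) ≤ f xs + g zs
      - ⟪Y (k+1), G (x (k+1)) - z (k+1)⟫
      - ⟪z (k+1) - z k, (G (x (k+1)) - z (k+1)) + (z (k+1) - zs)⟫ := by
    intro k
    have h1 := hxopt k xs hxs
    have h2 := hzopt k zs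
    rw [hzs] at h1
    have hYhat : Y k = Y (k+1) + (z (k+1) - z k) - (G (x (k+1)) - z k) := by
      rw [hY k]; abel
    rw [hYhat] at h1
    simp only [inner_add_left, inner_sub_left, inner_add_right, inner_sub_right] at h1 h2 ⊢
    linarith
  -- cross term positivity
  have hcross : ∀ k, 0 ≤ ⟪G (x (k+2)) - z (k+2), z (k+2) - z (k+1)⟫ := by
    intro k
    have h1 := hzopt (k+1) (z (k+1))
    have h2 := hzopt k (z (k+2))
    have e : z (k+1) - z (k+2) = -(z (k+2) - z (k+1)) := (neg_sub _ _).symm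
    rw [e, inner_neg_right] at h2
    rw [hY (k+1), inner_add_left] at h1
    linarith
  -- Lyapunov decrease
  have hVmono : ∀ k, ‖Y (k+2) - Ys‖^2 + ‖z (k+2) - zs‖^2
      + (‖G (x (k+2)) - z (k+2)‖^2 + ‖z (k+2) - z (k+1)‖^2)
      ≤ ‖Y (k+1) - Ys‖^2 + ‖z (k+1) - zs‖^2 := by
    intro k
    have h1 := hlow (k+1)
    have h2 := hup (k+1)
    have hE : ⟪Y (k+2) - Ys, G (x (k+2)) - z (k+2)⟫
        + ⟪z (k+2) - z (k+1), (G (x (k+2)) - z (k+2)) + (z (k+2) - zs)⟫ ≤ 0 := by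
      rw [inner_sub_left]; linarith
    have i1 : ‖Y (k+2) - Ys‖^2 = ‖Y (k+1) - Ys‖^2
        + 2 * ⟪Y (k+2) - Ys, G (x (k+2)) - z (k+2)⟫ - ‖G (x (k+2)) - z (k+2)‖^2 := by
      have e : Y (k+1) - Ys = (Y (k+2) - Ys) - (G (x (k+2)) - z (k+2)) := by
        rw [hY (k+1)]; abel
      rw [e, norm_sub_sq_real (Y (k+2) - Ys) (G (x (k+2)) - z (k+2))]; ring
    have i2 : ‖z (k+2) - zs‖^2 = ‖z (k+1) - zs‖^2
        + 2 * ⟪z (k+2) - zs, z (k+2) - z (k+1)⟫ - ‖z (k+2) - z (k+1)‖^2 := by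
      have e : z (k+1) - zs = (z (k+2) - zs) - (z (k+2) - z (k+1)) := by abel
      rw [e, norm_sub_sq_real (z (k+2) - zs) (z (k+2) - z (k+1))]; ring
    have hc := hcross k
    have comm1 : ⟪z (k+2) - zs, z (k+2) - z (k+1)⟫
        = ⟪z (k+2) - z (k+1), z (k+2) - zs⟫ := real_inner_comm _ _
    have comm2 : ⟪G (x (k+2)) - z (k+2), z (k+2) - z (k+1)⟫
        = ⟪z (k+2) - z (k+1), G (x (k+2)) - z (k+2)⟫ := real_inner_comm _ _
    rw [inner_add_right] at hE
    linarith
  -- summability of residuals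
  have hVnonneg : ∀ k : ℕ, (0:ℝ) ≤ ‖Y k - Ys‖^2 + ‖z k - zs‖^2 := fun k => by positivity
  have hpartial : ∀ K, (∑ m ∈ Finset.range K,
        (‖G (x (m+2)) - z (m+2)‖^2 + ‖z (m+2) - z (m+1)‖^2))
      + (‖Y (K+1) - Ys‖^2 + ‖z (K+1) - zs‖^2)
      ≤ ‖Y 1 - Ys‖^2 + ‖z 1 - zs‖^2 := by
    intro K
    induction K with
    | zero => simp
    | succ m ih =>
      rw [Finset.sum_range_succ]
      have := hVmono m
      linarith
  have hsummable : Summable (fun m => ‖G (x (m+2)) - z (m+2)‖^2 + ‖z (m+2) - z (m+1)‖^2) := by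
    apply summable_of_sum_range_le (c := ‖Y 1 - Ys‖^2 + ‖z 1 - zs‖^2) (fun m => by positivity)
    intro K
    have h1 := hpartial K
    have h2 := hVnonneg (K+1)
    linarith
  have hT0 := hsummable.tendsto_atTop_zero
  -- residual convergence
  have hrsq : Tendsto (fun k => ‖G (x k) - z k‖^2) atTop (nhds 0) := by
    apply (tendsto_add_atTop_iff_nat 2).mp
    refine squeeze_zero (fun m => by positivity) (fun m => ?_) hT0
    nlinarith [sq_nonneg ‖z (m+2) - z (m+1)‖]
  have hrn : Tendsto (fun k => ‖G (x k) - z k‖) atTop (nhds 0) := by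
    have h2 := (Real.continuous_sqrt.tendsto' 0 0 Real.sqrt_zero).comp hrsq
    have e : (fun k => Real.sqrt (‖G (x k) - z k‖^2)) = fun k => ‖G (x k) - z k‖ :=
      funext fun k => Real.sqrt_sq (norm_nonneg _)
    rw [← e]
    exact h2
  have hdzn : Tendsto (fun k => ‖z (k+1) - z k‖) atTop (nhds 0) := by
    apply (tendsto_add_atTop_iff_nat 1).mp
    have hdzsq : Tendsto (fun m => ‖z (m+2) - z (m+1)‖^2) atTop (nhds 0) := by
      refine squeeze_zero (fun m => by positivity) (fun m => ?_) hT0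
      nlinarith [sq_nonneg ‖G (x (m+2)) - z (m+2)‖]
    have h2 := (Real.continuous_sqrt.tendsto' 0 0 Real.sqrt_zero).comp hdzsq
    have e : (fun m => Real.sqrt (‖z (m+2) - z (m+1)‖^2)) = fun m => ‖z (m+2) - z (m+1)‖ :=
      funext fun m => Real.sqrt_sq (norm_nonneg _)
    rw [← e]
    exact h2
  -- boundedness
  set V1 : ℝ := ‖Y 1 - Ys‖^2 + ‖z 1 - zs‖^2 with hV1
  have hVb : ∀ k, ‖Y (k+1) - Ys‖^2 + ‖z (k+1) - zs‖^2 ≤ V1 := by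
    intro k
    induction k with
    | zero => exact le_refl _
    | succ m ih =>
      have h1 := hVmono m
      have h2 : (0:ℝ) ≤ ‖G (x (m+2)) - z (m+2)‖^2 + ‖z (m+2) - z (m+1)‖^2 := by positivity
      linarith
  have hYbound : ∀ k, ‖Y (k+1)‖ ≤ ‖Ys‖ + Real.sqrt V1 := by
    intro k
    have h1 : ‖Y (k+1) - Ys‖^2 ≤ V1 := by
      have := hVb k; nlinarith [sq_nonneg ‖z (k+1) - zs‖]
    have h2 : ‖Y (k+1) - Ys‖ ≤ Real.sqrt V1 := by
      rw [← Real.sqrt_sq (norm_nonneg (Y (k+1) - Ys))]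
      exact Real.sqrt_le_sqrt h1
    calc ‖Y (k+1)‖ = ‖(Y (k+1) - Ys) + Ys‖ := by rw [sub_add_cancel]
      _ ≤ ‖Y (k+1) - Ys‖ + ‖Ys‖ := norm_add_le _ _
      _ ≤ ‖Ys‖ + Real.sqrt V1 := by linarith
  have hzbound : ∀ k, ‖z (k+1) - zs‖ ≤ Real.sqrt V1 := by
    intro k
    have h1 : ‖z (k+1) - zs‖^2 ≤ V1 := by
      have := hVb k; nlinarith [sq_nonneg ‖Y (k+1) - Ys‖]
    rw [← Real.sqrt_sq (norm_nonneg (z (k+1) - zs))]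
    exact Real.sqrt_le_sqrt h1
  -- inner product limits
  have hrn1 : Tendsto (fun k => ‖G (x (k+1)) - z (k+1)‖) atTop (nhds 0) :=
    hrn.comp (tendsto_add_atTop_nat 1)
  have t1 : Tendsto (fun k => ⟪Ys, G (x (k+1)) - z (k+1)⟫) atTop (nhds 0) :=
    inner_tendsto_zero (Eventually.of_forall (fun _ => le_refl ‖Ys‖)) hrn1
  have t2 : Tendsto (fun k => ⟪Y (k+1), G (x (k+1)) - z (k+1)⟫) atTop (nhds 0) :=
    inner_tendsto_zero (Eventually.of_forall hYbound) hrn1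
  have t3 : Tendsto (fun k =>
      ⟪z (k+1) - z k, (G (x (k+1)) - z (k+1)) + (z (k+1) - zs)⟫) atTop (nhds 0) := by
    have hb : ∀ᶠ k in atTop,
        ‖(G (x (k+1)) - z (k+1)) + (z (k+1) - zs)‖ ≤ 1 + Real.sqrt V1 := by
      have hev : ∀ᶠ k in atTop, ‖G (x (k+1)) - z (k+1)‖ < 1 :=
        hrn1.eventually_lt_const one_pos
      filter_upwards [hev] with k hk
      calc ‖(G (x (k+1)) - z (k+1)) + (z (k+1) - zs)‖
          ≤ ‖G (x (k+1)) - z (k+1)‖ + ‖z (k+1) - zs‖ := norm_add_le _ _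
        _ ≤ 1 + Real.sqrt V1 := add_le_add hk.le (hzbound k)
    have t3' := inner_tendsto_zero (u := fun k => (G (x (k+1)) - z (k+1)) + (z (k+1) - zs))
      (v := fun k => z (k+1) - z k) hb hdzn
    have e : (fun k => ⟪z (k+1) - z k, (G (x (k+1)) - z (k+1)) + (z (k+1) - zs)⟫)
        = fun k => ⟪(G (x (k+1)) - z (k+1)) + (z (k+1) - zs), z (k+1) - z k⟫ :=
      funext fun k => real_inner_comm _ _
    rw [e]
    exact t3'
  -- squeeze for the objective
  have hobj1 : Tendsto (fun k => f (x (k+1)) + g (z (k+1))) atTop (nhds (f xs + g zs)) := by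
    have hlowt : Tendsto (fun k => f xs + g zs - ⟪Ys, G (x (k+1)) - z (k+1)⟫)
        atTop (nhds (f xs + g zs)) := by
      simpa using tendsto_const_nhds.sub t1
    have hupt : Tendsto (fun k => f xs + g zs - ⟪Y (k+1), G (x (k+1)) - z (k+1)⟫
        - ⟪z (k+1) - z k, (G (x (k+1)) - z (k+1)) + (z (k+1) - zs)⟫)
        atTop (nhds (f xs + g zs)) := by
      have h := ((tendsto_const_nhds (x := f xs + g zs)).sub t2).sub t3
      simpa using h
    exact tendsto_of_tendsto_of_tendsto_of_le_of_le hlowt hupt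
      (fun k => by have := hlow k; linarith) (fun k => hup k)
  exact ⟨(tendsto_add_atTop_iff_nat 1).mp hobj1, hrn⟩

/-- Convergence of the two-block ADMM (13) for the ℓ_q-row-norm (q = 2 or ∞) splitting:
if the split problem has a saddle point of its Lagrangian, then along the ADMM iterates
the objective `F₂` converges to the optimal value `F₂*` and the residuals
`‖XᵀW^k + e(b^k)ᵀ + E − A^k‖_F`, `‖W^k − U^k‖_F`, `‖W^k − V^k‖_F` converge to zero. -/
theorem stmt_15 (n p J : ℕ) (X : Matrix (Fin p) (Fin n) ℝ) (y : Fin n → Fin J)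
    (rnrm : (Fin J → ℝ) → ℝ)
    (hq : (∀ v : Fin J → ℝ, rnrm v = Real.sqrt (∑ j, (v j) ^ 2)) ∨
          (∀ v : Fin J → ℝ, rnrm v = ⨆ j, |v j|))
    (lam1 lam2 lam3 : ℝ) (hlam1 : 0 ≤ lam1) (hlam2 : 0 ≤ lam2) (hlam3 : 0 < lam3)
    (α μ ν : ℝ) (hα : 0 < α) (hμ : 0 < μ) (hν : 0 < ν)
    (Wseq : ℕ → Matrix (Fin p) (Fin J) ℝ) (bseq : ℕ → Fin J → ℝ)
    (Aseq : ℕ → Matrix (Fin n) (Fin J) ℝ) (Useq Vseq : ℕ → Matrix (Fin p) (Fin J) ℝ)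
    (Piseq : ℕ → Matrix (Fin n) (Fin J) ℝ) (Lamseq Gamseq : ℕ → Matrix (Fin p) (Fin J) ℝ)
    (Ws : Matrix (Fin p) (Fin J) ℝ) (bs : Fin J → ℝ)
    (As : Matrix (Fin n) (Fin J) ℝ) (Us Vs : Matrix (Fin p) (Fin J) ℝ)
    (Pis : Matrix (Fin n) (Fin J) ℝ) (Lams Gams : Matrix (Fin p) (Fin J) ℝ)
    (F2star : ℝ) :
    let c : Fin n → Fin J → ℝ := fun i j => if y i ≠ j then 1 else 0
    let feas : Matrix (Fin p) (Fin J) ℝ → (Fin J → ℝ) → Prop := fun W b =>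
      (∀ g, ∑ j, W g j = 0) ∧ (∑ j, b j = 0)
    let Amap : Matrix (Fin p) (Fin J) ℝ → (Fin J → ℝ) → Matrix (Fin n) (Fin J) ℝ :=
      fun W b => Matrix.of fun i j => (∑ g, X g i * W g j) + b j + 1
    let F2 : Matrix (Fin p) (Fin J) ℝ → (Fin J → ℝ) → Matrix (Fin n) (Fin J) ℝ →
        Matrix (Fin p) (Fin J) ℝ → Matrix (Fin p) (Fin J) ℝ → ℝ := fun W b A U V =>
      (1 / (n : ℝ)) * (∑ i, ∑ j, c i j * max (A i j) 0) + lam1 * (∑ g, ∑ j, |U g j|)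
        + lam2 * (∑ g, rnrm (fun j => V g j)) + lam3 / 2 * ∑ j, (b j) ^ 2
    let L0 : Matrix (Fin p) (Fin J) ℝ → (Fin J → ℝ) → Matrix (Fin n) (Fin J) ℝ →
        Matrix (Fin p) (Fin J) ℝ → Matrix (Fin p) (Fin J) ℝ →
        Matrix (Fin n) (Fin J) ℝ → Matrix (Fin p) (Fin J) ℝ →
        Matrix (Fin p) (Fin J) ℝ → ℝ := fun W b A U V Pv Lv Gv =>
      F2 W b A U V + (∑ i, ∑ j, Pv i j * (Amap W b i j - A i j))
        + (∑ g, ∑ j, Lv g j * (W g j - U g j))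
        + (∑ g, ∑ j, Gv g j * (W g j - V g j))
    let L2 : Matrix (Fin p) (Fin J) ℝ → (Fin J → ℝ) → Matrix (Fin n) (Fin J) ℝ →
        Matrix (Fin p) (Fin J) ℝ → Matrix (Fin p) (Fin J) ℝ →
        Matrix (Fin n) (Fin J) ℝ → Matrix (Fin p) (Fin J) ℝ →
        Matrix (Fin p) (Fin J) ℝ → ℝ := fun W b A U V Pv Lv Gv =>
      L0 W b A U V Pv Lv Gv + α / 2 * (∑ i, ∑ j, (Amap W b i j - A i j) ^ 2)
        + μ / 2 * (∑ g, ∑ j, (W g j - U g j) ^ 2)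
        + ν / 2 * (∑ g, ∑ j, (W g j - V g j) ^ 2)
    -- saddle point of the (unaugmented) Lagrangian, with optimal value F₂*
    feas Ws bs → As = Amap Ws bs → Us = Ws → Vs = Ws →
    F2star = F2 Ws bs As Us Vs →
    (∀ Pv Lv Gv, L0 Ws bs As Us Vs Pv Lv Gv ≤ L0 Ws bs As Us Vs Pis Lams Gams) →
    (∀ W b A U V, feas W b →
      L0 Ws bs As Us Vs Pis Lams Gams ≤ L0 W b A U V Pis Lams Gams) →
    -- ADMM updates (13a)-(13e)
    (∀ k, feas (Wseq (k + 1)) (bseq (k + 1)) ∧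
      ∀ W b, feas W b →
        L2 (Wseq (k + 1)) (bseq (k + 1)) (Aseq k) (Useq k) (Vseq k)
            (Piseq k) (Lamseq k) (Gamseq k)
          ≤ L2 W b (Aseq k) (Useq k) (Vseq k) (Piseq k) (Lamseq k) (Gamseq k)) →
    (∀ k A U V,
      L2 (Wseq (k + 1)) (bseq (k + 1)) (Aseq (k + 1)) (Useq (k + 1)) (Vseq (k + 1))
          (Piseq k) (Lamseq k) (Gamseq k)
        ≤ L2 (Wseq (k + 1)) (bseq (k + 1)) A U V (Piseq k) (Lamseq k) (Gamseq k)) →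
    (∀ k, Piseq (k + 1) = Matrix.of fun i j =>
      Piseq k i j + α * (Amap (Wseq (k + 1)) (bseq (k + 1)) i j - Aseq (k + 1) i j)) →
    (∀ k, Lamseq (k + 1) = Matrix.of fun g j =>
      Lamseq k g j + μ * (Wseq (k + 1) g j - Useq (k + 1) g j)) →
    (∀ k, Gamseq (k + 1) = Matrix.of fun g j =>
      Gamseq k g j + ν * (Wseq (k + 1) g j - Vseq (k + 1) g j)) →
    -- conclusions
    (Tendsto (fun k => F2 (Wseq k) (bseq k) (Aseq k) (Useq k) (Vseq k))
        atTop (nhds F2star) ∧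
     Tendsto (fun k =>
        Real.sqrt (∑ i, ∑ j, (Amap (Wseq k) (bseq k) i j - Aseq k i j) ^ 2))
       atTop (nhds 0) ∧
     Tendsto (fun k => Real.sqrt (∑ g, ∑ j, (Wseq k g j - Useq k g j) ^ 2))
       atTop (nhds 0) ∧
     Tendsto (fun k => Real.sqrt (∑ g, ∑ j, (Wseq k g j - Vseq k g j) ^ 2))
       atTop (nhds 0)) := by
  intro c feas Amap F2 L0 L2
  intro hfeas hAs hUs hVs hFstar _hsad1 hsad2 hstep1 hstep2 hPi hLam hGam
  -- square roots of the penalty parameters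
  let sa := Real.sqrt α
  let sm := Real.sqrt μ
  let sn := Real.sqrt ν
  have hsane : sa ≠ 0 := by simp only [sa]; positivity
  have hsmne : sm ≠ 0 := by simp only [sm]; positivity
  have hsnne : sn ≠ 0 := by simp only [sn]; positivity
  have hsa2 : sa * sa = α := Real.mul_self_sqrt hα.le
  have hsm2 : sm * sm = μ := Real.mul_self_sqrt hμ.le
  have hsn2 : sn * sn = ν := Real.mul_self_sqrt hν.le
  have hcnn : ∀ i j, 0 ≤ c i j := by
    intro i j; simp only [c]; split <;> norm_num
  have hninv : (0:ℝ) ≤ 1 / (n:ℝ) := by positivity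
  -- convexity of the row-norm
  have hrncvx : ∀ (u w : Fin J → ℝ) (t : ℝ), 0 ≤ t → t ≤ 1 →
      rnrm (fun j => u j + t * (w j - u j)) ≤ (1-t) * rnrm u + t * rnrm w := by
    rcases hq with hq | hq
    · intro u w t ht0 ht1
      have eu : ∀ v : Fin J → ℝ, rnrm v = ‖(WithLp.equiv 2 (∀ _ : Fin J, ℝ)).symm v‖ := by
        intro v
        rw [hq v, EuclideanSpace.norm_eq]
        congr 1
        exact Finset.sum_congr rfl fun j _ => by
          rw [WithLp.equiv_symm_apply, PiLp.toLp_apply, Real.norm_eq_abs, sq_abs]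
      rw [eu, eu, eu]
      have e : (WithLp.equiv 2 (∀ _ : Fin J, ℝ)).symm (fun j => u j + t * (w j - u j))
          = (1-t) • (WithLp.equiv 2 (∀ _ : Fin J, ℝ)).symm u
            + t • (WithLp.equiv 2 (∀ _ : Fin J, ℝ)).symm w := by
        ext j
        simp only [WithLp.equiv_symm_apply, PiLp.toLp_apply, PiLp.add_apply, PiLp.smul_apply, smul_eq_mul]
        ring
      rw [e]
      calc ‖(1-t) • (WithLp.equiv 2 (∀ _ : Fin J, ℝ)).symm u
            + t • (WithLp.equiv 2 (∀ _ : Fin J, ℝ)).symm w‖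
          ≤ ‖(1-t) • (WithLp.equiv 2 (∀ _ : Fin J, ℝ)).symm u‖
            + ‖t • (WithLp.equiv 2 (∀ _ : Fin J, ℝ)).symm w‖ := norm_add_le _ _
        _ = (1-t) * ‖(WithLp.equiv 2 (∀ _ : Fin J, ℝ)).symm u‖
            + t * ‖(WithLp.equiv 2 (∀ _ : Fin J, ℝ)).symm w‖ := by
            rw [norm_smul, norm_smul, Real.norm_eq_abs, Real.norm_eq_abs,
              abs_of_nonneg (by linarith : (0:ℝ) ≤ 1-t), abs_of_nonneg ht0]
    · intro u w t ht0 ht1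
      rw [hq, hq, hq]
      have h0u : 0 ≤ ⨆ j', |u j'| := Real.iSup_nonneg fun j => abs_nonneg _
      have h0w : 0 ≤ ⨆ j', |w j'| := Real.iSup_nonneg fun j => abs_nonneg _
      apply Real.iSup_le
      · intro j
        have h1 : |u j + t * (w j - u j)| ≤ (1-t) * |u j| + t * |w j| := abs_conv ht0 ht1
        have h2 : |u j| ≤ ⨆ j', |u j'| :=
          le_ciSup (f := fun j' => |u j'|) (Set.Finite.bddAbove (Set.finite_range _)) j
        have h3 : |w j| ≤ ⨆ j', |w j'| :=
          le_ciSup (f := fun j' => |w j'|) (Set.Finite.bddAbove (Set.finite_range _)) j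
        have h4 : (1-t) * |u j| ≤ (1-t) * (⨆ j', |u j'|) :=
          mul_le_mul_of_nonneg_left h2 (by linarith)
        have h5 : t * |w j| ≤ t * (⨆ j', |w j'|) := mul_le_mul_of_nonneg_left h3 ht0
        linarith
      · have e1 := mul_nonneg (show (0:ℝ) ≤ 1-t by linarith) h0u
        have e2 := mul_nonneg ht0 h0w
        linarith
  -- the concrete data for the abstract ADMM theorem
  let Hz := WithLp 2 ((EuclideanSpace ℝ (Fin n × Fin J)) ×
    WithLp 2 ((EuclideanSpace ℝ (Fin p × Fin J)) × (EuclideanSpace ℝ (Fin p × Fin J))))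
  let zC : Matrix (Fin n) (Fin J) ℝ → Matrix (Fin p) (Fin J) ℝ →
      Matrix (Fin p) (Fin J) ℝ → Hz :=
    fun A U V => WithLp.toLp 2 (sa • toE A, WithLp.toLp 2 (sm • toE U, sn • toE V))
  let yC : Matrix (Fin n) (Fin J) ℝ → Matrix (Fin p) (Fin J) ℝ →
      Matrix (Fin p) (Fin J) ℝ → Hz :=
    fun P L Gm => WithLp.toLp 2 (sa⁻¹ • toE P, WithLp.toLp 2 (sm⁻¹ • toE L, sn⁻¹ • toE Gm))
  let Gfun : Matrix (Fin p) (Fin J) ℝ × (Fin J → ℝ) → Hz :=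
    fun xv => zC (Amap xv.1 xv.2) xv.1 xv.1
  let ffun : Matrix (Fin p) (Fin J) ℝ × (Fin J → ℝ) → ℝ :=
    fun xv => lam3 / 2 * ∑ j, (xv.2 j)^2
  let gfun : Hz → ℝ := fun zv =>
    (1 / (n:ℝ)) * (∑ i, ∑ j, c i j * max (sa⁻¹ * zv.fst (i, j)) 0)
      + lam1 * (∑ g0, ∑ j, |sm⁻¹ * zv.snd.fst (g0, j)|)
      + lam2 * (∑ g0, rnrm (fun j => sn⁻¹ * zv.snd.snd (g0, j)))
  let Cfun : Matrix (Fin p) (Fin J) ℝ × (Fin J → ℝ) → Prop := fun xv => feas xv.1 xv.2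
  have hext : ∀ (u v : Hz), u.fst = v.fst → u.snd.fst = v.snd.fst → u.snd.snd = v.snd.snd →
      u = v :=
    fun u v h1 h2 h3 => WithLp.ofLp_injective 2 (Prod.ext h1
      (WithLp.ofLp_injective 2 (Prod.ext h2 h3)))
  -- glue computations
  have hgval : ∀ A U V, gfun (zC A U V) =
      (1 / (n:ℝ)) * (∑ i, ∑ j, c i j * max (A i j) 0) + lam1 * (∑ g0, ∑ j, |U g0 j|)
        + lam2 * (∑ g0, rnrm (fun j => V g0 j)) := by
    intro A U V
    simp only [gfun, zC, toE, WithLp.toLp_fst, WithLp.toLp_snd, PiLp.toLp_apply, PiLp.smul_apply, smul_eq_mul,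
      inv_mul_cancel_left₀ hsane, inv_mul_cancel_left₀ hsmne, inv_mul_cancel_left₀ hsnne]
  have hfg : ∀ W b A U V, ffun (W, b) + gfun (zC A U V) = F2 W b A U V := by
    intro W b A U V
    rw [hgval]
    simp only [ffun, F2]
    ring
  have hinnerY : ∀ (P : Matrix (Fin n) (Fin J) ℝ) (L Gm : Matrix (Fin p) (Fin J) ℝ)
      (A1 A2 : Matrix (Fin n) (Fin J) ℝ) (U1 U2 V1 V2 : Matrix (Fin p) (Fin J) ℝ),
      ⟪yC P L Gm, zC A1 U1 V1 - zC A2 U2 V2⟫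
        = (∑ i, ∑ j, P i j * (A1 i j - A2 i j))
          + (∑ g0, ∑ j, L g0 j * (U1 g0 j - U2 g0 j))
          + (∑ g0, ∑ j, Gm g0 j * (V1 g0 j - V2 g0 j)) := by
    intro P L Gm A1 A2 U1 U2 V1 V2
    calc ⟪yC P L Gm, zC A1 U1 V1 - zC A2 U2 V2⟫
        = ⟪sa⁻¹ • toE P, sa • toE A1 - sa • toE A2⟫
          + (⟪sm⁻¹ • toE L, sm • toE U1 - sm • toE U2⟫
            + ⟪sn⁻¹ • toE Gm, sn • toE V1 - sn • toE V2⟫) := rfl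
      _ = _ := by
          rw [smul_toE_sub sa A1 A2, smul_toE_sub sm U1 U2, smul_toE_sub sn V1 V2,
            inner_sE' hsane P _, inner_sE' hsmne L _,
            inner_sE' hsnne Gm _]
          ring
  have hnormsq : ∀ (A1 A2 : Matrix (Fin n) (Fin J) ℝ) (U1 U2 V1 V2 : Matrix (Fin p) (Fin J) ℝ),
      ‖zC A1 U1 V1 - zC A2 U2 V2‖^2
        = α * (∑ i, ∑ j, (A1 i j - A2 i j)^2) + μ * (∑ g0, ∑ j, (U1 g0 j - U2 g0 j)^2)
          + ν * (∑ g0, ∑ j, (V1 g0 j - V2 g0 j)^2) := by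
    intro A1 A2 U1 U2 V1 V2
    have e : zC A1 U1 V1 - zC A2 U2 V2
        = (WithLp.toLp 2 (sa • toE (fun i j => A1 i j - A2 i j),
            WithLp.toLp 2 (sm • toE (fun g0 j => U1 g0 j - U2 g0 j),
             sn • toE (fun g0 j => V1 g0 j - V2 g0 j))) : Hz) := by
      calc zC A1 U1 V1 - zC A2 U2 V2
          = (WithLp.toLp 2 (sa • toE A1 - sa • toE A2,
              WithLp.toLp 2 (sm • toE U1 - sm • toE U2, sn • toE V1 - sn • toE V2)) : Hz) := rfl
        _ = _ := by rw [smul_toE_sub sa A1 A2, smul_toE_sub sm U1 U2, smul_toE_sub sn V1 V2]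
    rw [e]
    rw [normsq_prod, normsq_prod]
    rw [show ((WithLp.toLp 2 (sa • toE (fun i j => A1 i j - A2 i j),
        WithLp.toLp 2 (sm • toE (fun g0 j => U1 g0 j - U2 g0 j),
         sn • toE (fun g0 j => V1 g0 j - V2 g0 j))) : Hz)).fst
        = sa • toE (fun i j => A1 i j - A2 i j) from rfl]
    rw [show ((WithLp.toLp 2 (sa • toE (fun i j => A1 i j - A2 i j),
        WithLp.toLp 2 (sm • toE (fun g0 j => U1 g0 j - U2 g0 j),
         sn • toE (fun g0 j => V1 g0 j - V2 g0 j))) : Hz)).snd.fst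
        = sm • toE (fun g0 j => U1 g0 j - U2 g0 j) from rfl]
    rw [show ((WithLp.toLp 2 (sa • toE (fun i j => A1 i j - A2 i j),
        WithLp.toLp 2 (sm • toE (fun g0 j => U1 g0 j - U2 g0 j),
         sn • toE (fun g0 j => V1 g0 j - V2 g0 j))) : Hz)).snd.snd
        = sn • toE (fun g0 j => V1 g0 j - V2 g0 j) from rfl]
    rw [normsq_sE', normsq_sE', normsq_sE', hsa2, hsm2, hsn2]
    ring
  have hL0eq : ∀ W b A U V P L Gm, L0 W b A U V P L Gm
      = ffun (W, b) + gfun (zC A U V) + ⟪yC P L Gm, Gfun (W, b) - zC A U V⟫ := by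
    intro W b A U V P L Gm
    have h1 : Gfun (W, b) = zC (Amap W b) W W := rfl
    rw [h1, hinnerY, hfg]
    simp only [L0]
    ring
  have hL2eq : ∀ W b A U V P L Gm, L2 W b A U V P L Gm
      = ffun (W, b) + gfun (zC A U V) + ⟪yC P L Gm, Gfun (W, b) - zC A U V⟫
        + 1/2 * ‖Gfun (W, b) - zC A U V‖^2 := by
    intro W b A U V P L Gm
    have h1 : Gfun (W, b) = zC (Amap W b) W W := rfl
    rw [h1, hinnerY, hnormsq, hfg]
    simp only [L2, L0]
    ring
  have hstar : L0 Ws bs As Us Vs Pis Lams Gams = F2star := by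
    rw [hFstar]
    simp only [L0]
    rw [hAs, hUs, hVs]
    simp
  -- convexity / affinity hypotheses
  have hC' : ∀ x y, Cfun x → Cfun y → ∀ t : ℝ, 0 ≤ t → t ≤ 1 → Cfun (x + t • (y - x)) := by
    intro xv yv hxv hyv t ht0 ht1
    obtain ⟨hW1, hb1⟩ := hxv
    obtain ⟨hW2, hb2⟩ := hyv
    refine ⟨fun g0 => ?_, ?_⟩
    · calc ∑ j, (xv + t • (yv - xv)).1 g0 j
          = ∑ j, (xv.1 g0 j + t * (yv.1 g0 j - xv.1 g0 j)) := rfl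
        _ = ∑ j, xv.1 g0 j + t * (∑ j, yv.1 g0 j - ∑ j, xv.1 g0 j) := by
            rw [show (∑ j, (xv.1 g0 j + t * (yv.1 g0 j - xv.1 g0 j)))
                = ∑ j, xv.1 g0 j + ∑ j, t * (yv.1 g0 j - xv.1 g0 j) from
              Finset.sum_add_distrib, ← Finset.mul_sum, Finset.sum_sub_distrib]
        _ = 0 := by rw [hW1 g0, hW2 g0]; ring
    · calc ∑ j, (xv + t • (yv - xv)).2 j
          = ∑ j, (xv.2 j + t * (yv.2 j - xv.2 j)) := rfl
        _ = ∑ j, xv.2 j + t * (∑ j, yv.2 j - ∑ j, xv.2 j) := by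
            rw [show (∑ j, (xv.2 j + t * (yv.2 j - xv.2 j)))
                = ∑ j, xv.2 j + ∑ j, t * (yv.2 j - xv.2 j) from
              Finset.sum_add_distrib, ← Finset.mul_sum, Finset.sum_sub_distrib]
        _ = 0 := by rw [hb1, hb2]; ring
  have hf' : ∀ x y, ∀ t : ℝ, 0 ≤ t → t ≤ 1 →
      ffun (x + t • (y - x)) ≤ ffun x + t * (ffun y - ffun x) := by
    intro xv yv t ht0 ht1
    have hcomp : ∀ j, (xv + t • (yv - xv)).2 j = xv.2 j + t * (yv.2 j - xv.2 j) := fun j => rfl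
    have hsum : ∑ j, ((xv + t • (yv - xv)).2 j)^2
        ≤ (1-t) * ∑ j, (xv.2 j)^2 + t * ∑ j, (yv.2 j)^2 := by
      refine sum_convex_bound _ _ _ _ t (fun j _ => ?_)
      rw [hcomp j]
      exact sq_conv ht0 ht1
    calc ffun (xv + t • (yv - xv))
        = lam3 / 2 * ∑ j, ((xv + t • (yv - xv)).2 j)^2 := rfl
      _ ≤ lam3 / 2 * ((1-t) * ∑ j, (xv.2 j)^2 + t * ∑ j, (yv.2 j)^2) :=
          mul_le_mul_of_nonneg_left hsum (by positivity)
      _ = ffun xv + t * (ffun yv - ffun xv) := by simp only [ffun]; ring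
  have hg' : ∀ x y, ∀ t : ℝ, 0 ≤ t → t ≤ 1 →
      gfun (x + t • (y - x)) ≤ gfun x + t * (gfun y - gfun x) := by
    intro z1 z2 t ht0 ht1
    have c1 : ∀ q : Fin n × Fin J,
        (z1 + t • (z2 - z1)).fst q = z1.fst q + t * (z2.fst q - z1.fst q) := fun q => rfl
    have c2 : ∀ q : Fin p × Fin J,
        (z1 + t • (z2 - z1)).snd.fst q = z1.snd.fst q + t * (z2.snd.fst q - z1.snd.fst q) := fun q => rfl
    have c3 : ∀ q : Fin p × Fin J,
        (z1 + t • (z2 - z1)).snd.snd q = z1.snd.snd q + t * (z2.snd.snd q - z1.snd.snd q) := fun q => rfl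
    have B1 : (∑ i, ∑ j, c i j * max (sa⁻¹ * (z1 + t • (z2 - z1)).fst (i, j)) 0)
        ≤ (1-t) * (∑ i, ∑ j, c i j * max (sa⁻¹ * z1.fst (i, j)) 0)
          + t * (∑ i, ∑ j, c i j * max (sa⁻¹ * z2.fst (i, j)) 0) := by
      refine sum_convex_bound _ _ _ _ t (fun i _ => ?_)
      refine sum_convex_bound _ _ _ _ t (fun j _ => ?_)
      rw [c1 (i, j)]
      have e : sa⁻¹ * (z1.fst (i, j) + t * (z2.fst (i, j) - z1.fst (i, j)))
          = sa⁻¹ * z1.fst (i, j) + t * (sa⁻¹ * z2.fst (i, j) - sa⁻¹ * z1.fst (i, j)) := by ring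
      calc c i j * max (sa⁻¹ * (z1.fst (i, j) + t * (z2.fst (i, j) - z1.fst (i, j)))) 0
          ≤ c i j * ((1-t) * max (sa⁻¹ * z1.fst (i, j)) 0 + t * max (sa⁻¹ * z2.fst (i, j)) 0) :=
            mul_le_mul_of_nonneg_left (by rw [e]; exact max_conv ht0 ht1) (hcnn i j)
        _ = (1-t) * (c i j * max (sa⁻¹ * z1.fst (i, j)) 0)
            + t * (c i j * max (sa⁻¹ * z2.fst (i, j)) 0) := by ring
    have B2 : (∑ g0, ∑ j, |sm⁻¹ * (z1 + t • (z2 - z1)).snd.fst (g0, j)|)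
        ≤ (1-t) * (∑ g0, ∑ j, |sm⁻¹ * z1.snd.fst (g0, j)|)
          + t * (∑ g0, ∑ j, |sm⁻¹ * z2.snd.fst (g0, j)|) := by
      refine sum_convex_bound _ _ _ _ t (fun g0 _ => ?_)
      refine sum_convex_bound _ _ _ _ t (fun j _ => ?_)
      rw [c2 (g0, j)]
      have e : sm⁻¹ * (z1.snd.fst (g0, j) + t * (z2.snd.fst (g0, j) - z1.snd.fst (g0, j)))
          = sm⁻¹ * z1.snd.fst (g0, j)
            + t * (sm⁻¹ * z2.snd.fst (g0, j) - sm⁻¹ * z1.snd.fst (g0, j)) := by ring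
      rw [e]
      exact abs_conv ht0 ht1
    have B3 : (∑ g0, rnrm (fun j => sn⁻¹ * (z1 + t • (z2 - z1)).snd.snd (g0, j)))
        ≤ (1-t) * (∑ g0, rnrm (fun j => sn⁻¹ * z1.snd.snd (g0, j)))
          + t * (∑ g0, rnrm (fun j => sn⁻¹ * z2.snd.snd (g0, j))) := by
      refine sum_convex_bound _ _ _ _ t (fun g0 _ => ?_)
      have e : (fun j => sn⁻¹ * (z1 + t • (z2 - z1)).snd.snd (g0, j))
          = fun j => (sn⁻¹ * z1.snd.snd (g0, j))
            + t * ((sn⁻¹ * z2.snd.snd (g0, j)) - (sn⁻¹ * z1.snd.snd (g0, j))) := by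
        funext j
        rw [c3 (g0, j)]
        ring
      rw [e]
      exact hrncvx _ _ t ht0 ht1
    have M1 := mul_le_mul_of_nonneg_left B1 hninv
    have M2 := mul_le_mul_of_nonneg_left B2 hlam1
    have M3 := mul_le_mul_of_nonneg_left B3 hlam2
    refine le_trans (add_le_add (add_le_add M1 M2) M3) (le_of_eq ?_)
    simp only [gfun]
    ring
  have hAmaplin : ∀ (W1 W2 : Matrix (Fin p) (Fin J) ℝ) (b1 b2 : Fin J → ℝ) (t : ℝ) i j,
      Amap (W1 + t • (W2 - W1)) (b1 + t • (b2 - b1)) i j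
        = Amap W1 b1 i j + t * (Amap W2 b2 i j - Amap W1 b1 i j) := by
    intro W1 W2 b1 b2 t i j
    simp only [Amap, Matrix.of_apply, Matrix.add_apply, Matrix.smul_apply, Matrix.sub_apply,
      Pi.add_apply, Pi.smul_apply, Pi.sub_apply, smul_eq_mul]
    rw [show (∑ g0, X g0 i * (W1 g0 j + t * (W2 g0 j - W1 g0 j)))
        = ∑ g0, (X g0 i * W1 g0 j + t * (X g0 i * W2 g0 j - X g0 i * W1 g0 j)) from
      Finset.sum_congr rfl (fun g0 _ => by ring)]
    rw [Finset.sum_add_distrib, ← Finset.mul_sum, Finset.sum_sub_distrib]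
    ring
  have hG' : ∀ x y (t : ℝ), Gfun (x + t • (y - x)) = Gfun x + t • (Gfun y - Gfun x) := by
    intro xv yv t
    refine hext _ _ ?_ ?_ ?_
    · ext q
      have e1 : (Gfun (xv + t • (yv - xv))).fst q
          = sa * Amap (xv.1 + t • (yv.1 - xv.1)) (xv.2 + t • (yv.2 - xv.2)) q.1 q.2 := rfl
      have e2 : (Gfun xv + t • (Gfun yv - Gfun xv)).fst q
          = sa * Amap xv.1 xv.2 q.1 q.2
            + t * (sa * Amap yv.1 yv.2 q.1 q.2 - sa * Amap xv.1 xv.2 q.1 q.2) := rfl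
      rw [e1, e2, hAmaplin]
      ring
    · ext q
      have e1 : (Gfun (xv + t • (yv - xv))).snd.fst q
          = sm * (xv.1 q.1 q.2 + t * (yv.1 q.1 q.2 - xv.1 q.1 q.2)) := rfl
      have e2 : (Gfun xv + t • (Gfun yv - Gfun xv)).snd.fst q
          = sm * xv.1 q.1 q.2 + t * (sm * yv.1 q.1 q.2 - sm * xv.1 q.1 q.2) := rfl
      rw [e1, e2]
      ring
    · ext q
      have e1 : (Gfun (xv + t • (yv - xv))).snd.snd q
          = sn * (xv.1 q.1 q.2 + t * (yv.1 q.1 q.2 - xv.1 q.1 q.2)) := rfl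
      have e2 : (Gfun xv + t • (Gfun yv - Gfun xv)).snd.snd q
          = sn * xv.1 q.1 q.2 + t * (sn * yv.1 q.1 q.2 - sn * xv.1 q.1 q.2) := rfl
      rw [e1, e2]
      ring
  -- saddle point data
  have hxs' : Cfun (Ws, bs) := hfeas
  have hzs' : Gfun (Ws, bs) = zC As Us Vs := by
    show zC (Amap Ws bs) Ws Ws = zC As Us Vs
    rw [hAs, hUs, hVs]
  have hzdec : ∀ zv : Hz,
      zC (fun i j => sa⁻¹ * zv.fst (i, j)) (fun g0 j => sm⁻¹ * zv.snd.fst (g0, j))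
        (fun g0 j => sn⁻¹ * zv.snd.snd (g0, j)) = zv := by
    intro zv
    refine hext _ _ ?_ ?_ ?_
    · ext q
      show sa * (sa⁻¹ * zv.fst q) = zv.fst q
      exact mul_inv_cancel_left₀ hsane _
    · ext q
      show sm * (sm⁻¹ * zv.snd.fst q) = zv.snd.fst q
      exact mul_inv_cancel_left₀ hsmne _
    · ext q
      show sn * (sn⁻¹ * zv.snd.snd q) = zv.snd.snd q
      exact mul_inv_cancel_left₀ hsnne _
  have hsad' : ∀ xv zv, Cfun xv → ffun (Ws, bs) + gfun (zC As Us Vs)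
      ≤ ffun xv + gfun zv + ⟪yC Pis Lams Gams, Gfun xv - zv⟫ := by
    intro xv zv hxv
    obtain ⟨W, b⟩ := xv
    have h := hsad2 W b (fun i j => sa⁻¹ * zv.fst (i, j)) (fun g0 j => sm⁻¹ * zv.snd.fst (g0, j))
      (fun g0 j => sn⁻¹ * zv.snd.snd (g0, j)) hxv
    rw [hstar, hL0eq _ _ (fun i j => sa⁻¹ * zv.fst (i, j)) (fun g0 j => sm⁻¹ * zv.snd.fst (g0, j))
      (fun g0 j => sn⁻¹ * zv.snd.snd (g0, j)) _ _ _, hzdec zv] at h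
    rw [hfg, ← hFstar]
    exact h
  -- the ADMM iteration hypotheses
  have hx' : ∀ k, Cfun (Wseq (k+1), bseq (k+1)) ∧ ∀ x', Cfun x' →
      ffun (Wseq (k+1), bseq (k+1)) + gfun (zC (Aseq k) (Useq k) (Vseq k))
          + ⟪yC (Piseq k) (Lamseq k) (Gamseq k),
              Gfun (Wseq (k+1), bseq (k+1)) - zC (Aseq k) (Useq k) (Vseq k)⟫
          + 1/2 * ‖Gfun (Wseq (k+1), bseq (k+1)) - zC (Aseq k) (Useq k) (Vseq k)‖^2
        ≤ ffun x' + gfun (zC (Aseq k) (Useq k) (Vseq k))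
          + ⟪yC (Piseq k) (Lamseq k) (Gamseq k), Gfun x' - zC (Aseq k) (Useq k) (Vseq k)⟫
          + 1/2 * ‖Gfun x' - zC (Aseq k) (Useq k) (Vseq k)‖^2 := by
    intro k
    refine ⟨(hstep1 k).1, ?_⟩
    intro x' hx'
    obtain ⟨W', b'⟩ := x'
    have h := (hstep1 k).2 W' b' hx'
    rw [hL2eq, hL2eq] at h
    exact h
  have hz' : ∀ k (zv : Hz),
      ffun (Wseq (k+1), bseq (k+1)) + gfun (zC (Aseq (k+1)) (Useq (k+1)) (Vseq (k+1)))
          + ⟪yC (Piseq k) (Lamseq k) (Gamseq k),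
              Gfun (Wseq (k+1), bseq (k+1)) - zC (Aseq (k+1)) (Useq (k+1)) (Vseq (k+1))⟫
          + 1/2 * ‖Gfun (Wseq (k+1), bseq (k+1))
              - zC (Aseq (k+1)) (Useq (k+1)) (Vseq (k+1))‖^2
        ≤ ffun (Wseq (k+1), bseq (k+1)) + gfun zv
          + ⟪yC (Piseq k) (Lamseq k) (Gamseq k), Gfun (Wseq (k+1), bseq (k+1)) - zv⟫
          + 1/2 * ‖Gfun (Wseq (k+1), bseq (k+1)) - zv‖^2 := by
    intro k zv
    have h := hstep2 k (fun i j => sa⁻¹ * zv.fst (i, j)) (fun g0 j => sm⁻¹ * zv.snd.fst (g0, j))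
      (fun g0 j => sn⁻¹ * zv.snd.snd (g0, j))
    rw [hL2eq, hL2eq _ _ (fun i j => sa⁻¹ * zv.fst (i, j)) (fun g0 j => sm⁻¹ * zv.snd.fst (g0, j))
      (fun g0 j => sn⁻¹ * zv.snd.snd (g0, j)) _ _ _, hzdec zv] at h
    exact h
  have hY' : ∀ k, yC (Piseq (k+1)) (Lamseq (k+1)) (Gamseq (k+1))
      = yC (Piseq k) (Lamseq k) (Gamseq k)
        + (Gfun (Wseq (k+1), bseq (k+1)) - zC (Aseq (k+1)) (Useq (k+1)) (Vseq (k+1))) := by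
    intro k
    refine hext _ _ ?_ ?_ ?_
    · ext q
      show sa⁻¹ * Piseq (k+1) q.1 q.2
        = sa⁻¹ * Piseq k q.1 q.2
          + (sa * Amap (Wseq (k+1)) (bseq (k+1)) q.1 q.2 - sa * Aseq (k+1) q.1 q.2)
      rw [hPi k]
      show sa⁻¹ * (Piseq k q.1 q.2
          + α * (Amap (Wseq (k+1)) (bseq (k+1)) q.1 q.2 - Aseq (k+1) q.1 q.2)) = _
      rw [← hsa2]
      field_simp
    · ext q
      show sm⁻¹ * Lamseq (k+1) q.1 q.2
        = sm⁻¹ * Lamseq k q.1 q.2 + (sm * Wseq (k+1) q.1 q.2 - sm * Useq (k+1) q.1 q.2)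
      rw [hLam k]
      show sm⁻¹ * (Lamseq k q.1 q.2 + μ * (Wseq (k+1) q.1 q.2 - Useq (k+1) q.1 q.2)) = _
      rw [← hsm2]
      field_simp
    · ext q
      show sn⁻¹ * Gamseq (k+1) q.1 q.2
        = sn⁻¹ * Gamseq k q.1 q.2 + (sn * Wseq (k+1) q.1 q.2 - sn * Vseq (k+1) q.1 q.2)
      rw [hGam k]
      show sn⁻¹ * (Gamseq k q.1 q.2 + ν * (Wseq (k+1) q.1 q.2 - Vseq (k+1) q.1 q.2)) = _
      rw [← hsn2]
      field_simp
  -- apply the abstract ADMM convergence theorem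
  obtain ⟨hobj, hres⟩ := admm_abstract Cfun ffun gfun Gfun hC' hf' hg' hG'
    (Ws, bs) (zC As Us Vs) (yC Pis Lams Gams) hxs' hzs' hsad'
    (fun k => (Wseq k, bseq k)) (fun k => zC (Aseq k) (Useq k) (Vseq k))
    (fun k => yC (Piseq k) (Lamseq k) (Gamseq k)) hx' hz' hY'
  -- transport the conclusions
  have hsq : Tendsto (fun k =>
      α * (∑ i, ∑ j, (Amap (Wseq k) (bseq k) i j - Aseq k i j)^2)
        + μ * (∑ g0, ∑ j, (Wseq k g0 j - Useq k g0 j)^2)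
        + ν * (∑ g0, ∑ j, (Wseq k g0 j - Vseq k g0 j)^2)) atTop (nhds 0) := by
    have h2 : Tendsto (fun k =>
        ‖Gfun (Wseq k, bseq k) - zC (Aseq k) (Useq k) (Vseq k)‖^2) atTop (nhds 0) := by
      have := hres.mul hres
      simp only [mul_zero] at this
      refine this.congr (fun k => ?_)
      rw [pow_two]
    refine h2.congr (fun k => ?_)
    rw [show Gfun (Wseq k, bseq k) = zC (Amap (Wseq k) (bseq k)) (Wseq k) (Wseq k) from rfl,
      hnormsq]
  have hkey : ∀ (ρ : ℝ) (hρ : 0 < ρ) (S : ℕ → ℝ), (∀ k, 0 ≤ S k) →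
      (∀ k, ρ * S k ≤ α * (∑ i, ∑ j, (Amap (Wseq k) (bseq k) i j - Aseq k i j)^2)
        + μ * (∑ g0, ∑ j, (Wseq k g0 j - Useq k g0 j)^2)
        + ν * (∑ g0, ∑ j, (Wseq k g0 j - Vseq k g0 j)^2)) →
      Tendsto (fun k => Real.sqrt (S k)) atTop (nhds 0) := by
    intro ρ hρ S hS0 hSle
    have hS : Tendsto S atTop (nhds 0) := by
      refine squeeze_zero (g := fun k =>
          ρ⁻¹ * (α * (∑ i, ∑ j, (Amap (Wseq k) (bseq k) i j - Aseq k i j)^2)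
          + μ * (∑ g0, ∑ j, (Wseq k g0 j - Useq k g0 j)^2)
          + ν * (∑ g0, ∑ j, (Wseq k g0 j - Vseq k g0 j)^2))) hS0 (fun k => ?_) ?_
      · have h1 := hSle k
        rw [← inv_mul_cancel_left₀ (ne_of_gt hρ) (S k)]
        exact mul_le_mul_of_nonneg_left h1 (by positivity)
      · simpa using hsq.const_mul ρ⁻¹
    have h2 := (Real.continuous_sqrt.tendsto' 0 0 Real.sqrt_zero).comp hS
    exact h2
  have hpos : ∀ k, (0:ℝ) ≤ α * (∑ i, ∑ j, (Amap (Wseq k) (bseq k) i j - Aseq k i j)^2) := by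
    intro k; positivity
  refine ⟨?_, ?_, ?_, ?_⟩
  · -- objective convergence
    have e2 : F2star = ffun (Ws, bs) + gfun (zC As Us Vs) := by
      rw [hfg]; exact hFstar
    rw [e2]
    exact hobj.congr (fun k => hfg (Wseq k) (bseq k) (Aseq k) (Useq k) (Vseq k))
  · refine hkey α hα _ (fun k => by positivity) (fun k => ?_)
    have h1 : (0:ℝ) ≤ μ * (∑ g0, ∑ j, (Wseq k g0 j - Useq k g0 j)^2) := by positivity
    have h2 : (0:ℝ) ≤ ν * (∑ g0, ∑ j, (Wseq k g0 j - Vseq k g0 j)^2) := by positivity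
    linarith
  · refine hkey μ hμ _ (fun k => by positivity) (fun k => ?_)
    have h1 : (0:ℝ) ≤ α * (∑ i, ∑ j, (Amap (Wseq k) (bseq k) i j - Aseq k i j)^2) := by
      positivity
    have h2 : (0:ℝ) ≤ ν * (∑ g0, ∑ j, (Wseq k g0 j - Vseq k g0 j)^2) := by positivity
    linarith
  · refine hkey ν hν _ (fun k => by positivity) (fun k => ?_)
    have h1 : (0:ℝ) ≤ α * (∑ i, ∑ j, (Amap (Wseq k) (bseq k) i j - Aseq k i j)^2) := by
      positivity
    have h2 : (0:ℝ) ≤ μ * (∑ g0, ∑ j, (Wseq k g0 j - Useq k g0 j)^2) := by positivity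
    linarith
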